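/- Two π-forms are equal exactly when their index data coincide: if m, n, m', n' ≥ 0, i_1 < ⋯ < i_m, j_1 > ⋯ > j_n, k_1 < ⋯ < k_{m'}, h_1 > ⋯ > h_{n'} are integers, r_1 > max(i_m, j_1), r_2 > max(k_{m'}, h_1), and a†_{i_1}⋯a†_{i_m} a_{r_1} a†_{r_1} a_{j_1}⋯a_{j_n} = a†_{k_1}⋯a†_{k_{m'}} a_{r_2} a†_{r_2} a_{h_1}⋯a_{h_{n'}} as operators on F_m, then m = m', n = n', r_1 = r_2, i_l = k_l for l = 1,…,m and j_l = h_l for l = 1,…,n. -/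

import Mathlib

open scoped InnerProductSpace ComplexOrder
open ContinuousLinearMap Filter

noncomputable section

/-- The monotone Fock space `F_m = ℓ²(Finset ℤ)`, the Hilbert space of square-summable
complex families indexed by the finite subsets of `ℤ`. -/
abbrev Fm : Type := lp (fun _ : Finset ℤ => ℂ) 2

/-- The canonical orthonormal basis vector `e_A`, for `A` a finite subset of `ℤ`;
`e ∅` is the vacuum vector `Ω`. -/
noncomputable def e (A : Finset ℤ) : Fm := lp.single 2 A 1

/-- `adag` is the family of monotone creation operators: `adag i` sends `e A` to
`e (A ∪ {i})` if `A = ∅` or `i < min A` (equivalently, `i < j` for all `j ∈ A`),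
and to `0` otherwise. -/
def CreatesOn (adag : ℤ → (Fm →L[ℂ] Fm)) : Prop :=
  ∀ (i : ℤ) (A : Finset ℤ),
    adag i (e A) = if ∀ j ∈ A, i < j then e (insert i A) else 0

/-- `a` is the family of monotone annihilation operators: `a i` sends `e A` to
`e (A \ {i})` if `A ≠ ∅` and `i = min A` (equivalently, `i ∈ A` and `i ≤ j` for all
`j ∈ A`), and to `0` otherwise. -/
def AnnihilatesOn (a : ℤ → (Fm →L[ℂ] Fm)) : Prop :=
  ∀ (i : ℤ) (A : Finset ℤ),
    a i (e A) = if i ∈ A ∧ ∀ j ∈ A, i ≤ j then e (A.erase i) else 0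

/-- A λ-form: an operator `X = a†_{i_1}⋯a†_{i_m} a_{j_1}⋯a_{j_n}` with
`i_1 < ⋯ < i_m` and `j_1 > ⋯ > j_n` (the identity `I` when `m = n = 0`). -/
def IsLambdaForm (a adag : ℤ → (Fm →L[ℂ] Fm)) (X : Fm →L[ℂ] Fm) : Prop :=
  ∃ is js : List ℤ, is.Chain' (· < ·) ∧ js.Chain' (· > ·) ∧
    X = (is.map adag).prod * (js.map a).prod

/-- A π-form: an operator `X = a†_{i_1}⋯a†_{i_m} a_k a†_k a_{j_1}⋯a_{j_n}` with
`i_1 < ⋯ < i_m`, `j_1 > ⋯ > j_n`, `k > i_m` and `k > j_1` (equivalently, `k` exceeds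
every index occurring in the increasing and decreasing strings). -/
def IsPiForm (a adag : ℤ → (Fm →L[ℂ] Fm)) (X : Fm →L[ℂ] Fm) : Prop :=
  ∃ (is js : List ℤ) (k : ℤ), is.Chain' (· < ·) ∧ js.Chain' (· > ·) ∧
    (∀ i ∈ is, i < k) ∧ (∀ j ∈ js, j < k) ∧
    X = (is.map adag).prod * (a k * adag k) * (js.map a).prod

theorem e_inj {A B : Finset ℤ} (h : e A = e B) : A = B := by
  by_contra hne
  have := congrArg (fun (v : Fm) => (v : ∀ _ : Finset ℤ, ℂ) A) h
  simp only [e, lp.single_apply] at this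
  rw [Pi.single_eq_same, Pi.single_eq_of_ne hne] at this
  exact one_ne_zero this

theorem e_ne_zero (A : Finset ℤ) : e A ≠ 0 := by
  intro h
  have := congrArg (fun (v : Fm) => (v : ∀ _ : Finset ℤ, ℂ) A) h
  simp only [e, lp.single_apply] at this
  rw [Pi.single_eq_same] at this
  have h0 : ((0 : Fm) : ∀ _ : Finset ℤ, ℂ) A = 0 := rfl
  rw [h0] at this
  exact one_ne_zero this

/-- Evaluation of a decreasing annihilation string on `e (js.toFinset ∪ S)`. -/
theorem ann_eval (a : ℤ → (Fm →L[ℂ] Fm)) (ha : AnnihilatesOn a) :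
    ∀ (js : List ℤ) (S : Finset ℤ), js.Pairwise (· > ·) →
      (∀ j ∈ js, ∀ t ∈ S, j < t) →
      (js.map a).prod (e (js.toFinset ∪ S)) = e S := by
  intro js
  induction js with
  | nil => intro S _ _; simp
  | cons j rest ih =>
    intro S hp hlt
    have hrestj : ∀ x ∈ rest, x < j := fun x hx => (List.pairwise_cons.1 hp).1 x hx
    have hSet : (j :: rest).toFinset ∪ S = rest.toFinset ∪ insert j S := by
      ext x; simp [List.toFinset_cons]

    rw [List.map_cons, List.prod_cons, mul_apply_eq_comp, hSet,
      ih (insert j S) (List.pairwise_cons.1 hp).2 ?_]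
    · rw [ha j (insert j S), if_pos ?_]
      · congr 1
        rw [Finset.erase_insert]
        intro hjS
        exact absurd rfl (ne_of_lt (hlt j (by simp) j hjS))
      · refine ⟨Finset.mem_insert_self _ _, ?_⟩
        intro t ht
        rcases Finset.mem_insert.1 ht with rfl | ht
        · exact le_refl _
        · exact le_of_lt (hlt j (by simp) t ht)
    · intro x hx t ht
      rcases Finset.mem_insert.1 ht with rfl | ht
      · exact hrestj x hx
      · exact hlt x (by simp [hx]) t ht

/-- Evaluation of an increasing creation string on `e S`. -/
theorem cre_eval (adag : ℤ → (Fm →L[ℂ] Fm)) (hadag : CreatesOn adag) :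
    ∀ (is : List ℤ) (S : Finset ℤ), is.Pairwise (· < ·) →
      (∀ i ∈ is, ∀ t ∈ S, i < t) →
      (is.map adag).prod (e S) = e (is.toFinset ∪ S) := by
  intro is
  induction is with
  | nil => intro S _ _; simp
  | cons i rest ih =>
    intro S hp hlt
    have hresti : ∀ x ∈ rest, i < x := fun x hx => (List.pairwise_cons.1 hp).1 x hx
    rw [List.map_cons, List.prod_cons, mul_apply_eq_comp,
      ih S (List.pairwise_cons.1 hp).2 (fun x hx t ht => hlt x (by simp [hx]) t ht),
      hadag i (rest.toFinset ∪ S), if_pos ?_]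
    · congr 1
      ext x; simp [List.toFinset_cons]
    · intro t ht
      rcases Finset.mem_union.1 ht with ht | ht
      · exact hresti t (List.mem_toFinset.1 ht)
      · exact hlt i (by simp) t ht

/-- General shape of annihilation strings: result is `0` or `e (A \ js.toFinset)`
with `js.toFinset ⊆ A`. -/
theorem ann_full (a : ℤ → (Fm →L[ℂ] Fm)) (ha : AnnihilatesOn a) :
    ∀ (js : List ℤ) (A : Finset ℤ),
      (js.map a).prod (e A) = 0 ∨
      (js.toFinset ⊆ A ∧ (js.map a).prod (e A) = e (A \ js.toFinset)) := by
  intro js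
  induction js with
  | nil => intro A; right; simp
  | cons j rest ih =>
    intro A
    rw [List.map_cons, List.prod_cons, mul_apply_eq_comp]
    rcases ih A with h0 | ⟨hsub, hval⟩
    · left; rw [h0, map_zero]
    · rw [hval, ha j (A \ rest.toFinset)]
      by_cases hc : j ∈ A \ rest.toFinset ∧ ∀ t ∈ A \ rest.toFinset, j ≤ t
      · right
        rw [if_pos hc]
        constructor
        · intro x hx
          rcases List.mem_cons.1 (List.mem_toFinset.1 hx) with h | h
          · exact h ▸ (Finset.mem_sdiff.1 hc.1).1
          · exact hsub (List.mem_toFinset.2 h)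
        · congr 1
          ext x
          simp [List.toFinset_cons, Finset.mem_erase, Finset.mem_sdiff]
          tauto
      · left; rw [if_neg hc]

/-- The middle factor `a r * adag r` fixes `e S` when `r` is below all of `S`. -/
theorem mid_eval (a adag : ℤ → (Fm →L[ℂ] Fm)) (ha : AnnihilatesOn a)
    (hadag : CreatesOn adag) (r : ℤ) (S : Finset ℤ) (hlt : ∀ t ∈ S, r < t) :
    (a r) ((adag r) (e S)) = e S := by
  rw [hadag r S, if_pos hlt, ha r (insert r S), if_pos ?_]
  · congr 1
    exact Finset.erase_insert (fun hrS => lt_irrefl r (hlt r hrS))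
  · refine ⟨Finset.mem_insert_self _ _, ?_⟩
    intro t ht
    rcases Finset.mem_insert.1 ht with rfl | ht
    · exact le_refl _
    · exact le_of_lt (hlt t ht)

theorem side_empty (a adag : ℤ → (Fm →L[ℂ] Fm)) (ha : AnnihilatesOn a)
    (hadag : CreatesOn adag) (is js : List ℤ) (r : ℤ)
    (pis : is.Pairwise (· < ·)) (pjs : js.Pairwise (· > ·)) :
    ((is.map adag).prod * (a r * adag r) * (js.map a).prod) (e js.toFinset)
      = e is.toFinset := by
  simp only [mul_apply_eq_comp]
  have hq : (js.map a).prod (e js.toFinset) = e ∅ := by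
    have := ann_eval a ha js ∅ pjs (by simp)
    simpa using this
  rw [hq, mid_eval a adag ha hadag r ∅ (by simp)]
  have := cre_eval adag hadag is ∅ pis (by simp)
  simpa using this

theorem side_pos (a adag : ℤ → (Fm →L[ℂ] Fm)) (ha : AnnihilatesOn a)
    (hadag : CreatesOn adag) (is js : List ℤ) (r s : ℤ)
    (pis : is.Pairwise (· < ·)) (pjs : js.Pairwise (· > ·))
    (his : ∀ i ∈ is, i < s) (hjs : ∀ j ∈ js, j < s) (hrs : r < s) :
    ((is.map adag).prod * (a r * adag r) * (js.map a).prod) (e (js.toFinset ∪ {s}))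
      = e (is.toFinset ∪ {s}) := by
  simp only [mul_apply_eq_comp]
  rw [ann_eval a ha js {s} pjs (by intro j hj t ht; rw [Finset.mem_singleton] at ht; exact ht ▸ hjs j hj),
    mid_eval a adag ha hadag r {s} (by intro t ht; rw [Finset.mem_singleton] at ht; exact ht ▸ hrs),
    cre_eval adag hadag is {s} pis (by intro i hi t ht; rw [Finset.mem_singleton] at ht; exact ht ▸ his i hi)]

theorem side_zero (a adag : ℤ → (Fm →L[ℂ] Fm)) (ha : AnnihilatesOn a)
    (hadag : CreatesOn adag) (is js : List ℤ) (r : ℤ)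
    (pjs : js.Pairwise (· > ·)) (hjs : ∀ j ∈ js, j < r) :
    ((is.map adag).prod * (a r * adag r) * (js.map a).prod) (e (js.toFinset ∪ {r}))
      = 0 := by
  simp only [mul_apply_eq_comp]
  rw [ann_eval a ha js {r} pjs (by intro j hj t ht; rw [Finset.mem_singleton] at ht; exact ht ▸ hjs j hj),
    hadag r {r}, if_neg (by push_neg; exact ⟨r, Finset.mem_singleton_self r, le_refl r⟩),
    map_zero, map_zero]

theorem sorted_lt_ext {l₁ l₂ : List ℤ} (p₁ : l₁.Pairwise (· < ·))
    (p₂ : l₂.Pairwise (· < ·)) (h : l₁.toFinset = l₂.toFinset) : l₁ = l₂ := by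
  have n₁ : l₁.Nodup := p₁.imp ne_of_lt
  have n₂ : l₂.Nodup := p₂.imp ne_of_lt
  exact List.Perm.eq_of_pairwise' p₁ p₂ (List.perm_of_nodup_nodup_toFinset_eq n₁ n₂ h)

theorem sorted_gt_ext {l₁ l₂ : List ℤ} (p₁ : l₁.Pairwise (· > ·))
    (p₂ : l₂.Pairwise (· > ·)) (h : l₁.toFinset = l₂.toFinset) : l₁ = l₂ := by
  have n₁ : l₁.Nodup := p₁.imp ne_of_gt
  have n₂ : l₂.Nodup := p₂.imp ne_of_gt
  exact List.Perm.eq_of_pairwise' p₁ p₂ (List.perm_of_nodup_nodup_toFinset_eq n₁ n₂ h)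

/-- Lemma 4.4 (ii): two π-forms are equal exactly when their index data coincide.
Here `is`/`ks` are the (strictly increasing) lists of creation indices, `js`/`hs` the
(strictly decreasing) lists of annihilation indices, and `r₁`, `r₂` the middle indices,
which dominate all other indices. -/
theorem piForm_inj
    (a adag : ℤ → (Fm →L[ℂ] Fm))
    (ha : AnnihilatesOn a) (hadag : CreatesOn adag)
    (is js ks hs : List ℤ) (r₁ r₂ : ℤ)
    (h1 : is.Chain' (· < ·)) (h2 : js.Chain' (· > ·))
    (h3 : ks.Chain' (· < ·)) (h4 : hs.Chain' (· > ·))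
    (hr₁ : ∀ i ∈ is, i < r₁) (hr₁' : ∀ j ∈ js, j < r₁)
    (hr₂ : ∀ i ∈ ks, i < r₂) (hr₂' : ∀ j ∈ hs, j < r₂)
    (heq : (is.map adag).prod * (a r₁ * adag r₁) * (js.map a).prod
         = (ks.map adag).prod * (a r₂ * adag r₂) * (hs.map a).prod) :
    is = ks ∧ js = hs ∧ r₁ = r₂ := by
  have p1 : is.Pairwise (· < ·) := List.isChain_iff_pairwise.mp h1
  have p2 : js.Pairwise (· > ·) := List.isChain_iff_pairwise.mp h2
  have p3 : ks.Pairwise (· < ·) := List.isChain_iff_pairwise.mp h3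
  have p4 : hs.Pairwise (· > ·) := List.isChain_iff_pairwise.mp h4
  -- Step 1 : js = hs
  have hLJ := side_empty a adag ha hadag is js r₁ p1 p2
  have hRH := side_empty a adag ha hadag ks hs r₂ p3 p4
  have evalJ := congrArg (fun X : Fm →L[ℂ] Fm => X (e js.toFinset)) heq
  have evalH := congrArg (fun X : Fm →L[ℂ] Fm => X (e hs.toFinset)) heq
  rw [hLJ] at evalJ
  rw [hRH] at evalH
  have hsub1 : hs.toFinset ⊆ js.toFinset := by
    rcases ann_full a ha hs js.toFinset with h0 | ⟨hsub, _⟩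
    · exfalso
      apply e_ne_zero is.toFinset
      rw [evalJ]
      simp only [mul_apply_eq_comp]
      rw [h0, map_zero, map_zero, map_zero]
    · exact hsub
  have hsub2 : js.toFinset ⊆ hs.toFinset := by
    rcases ann_full a ha js hs.toFinset with h0 | ⟨hsub, _⟩
    · exfalso
      apply e_ne_zero ks.toFinset
      rw [← evalH]
      simp only [mul_apply_eq_comp]
      rw [h0, map_zero, map_zero, map_zero]
    · exact hsub
  have hjs_hs : js = hs := sorted_gt_ext p2 p4 (subset_antisymm hsub2 hsub1)
  subst hjs_hs
  -- Step 2 : r₁ = r₂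
  have hr12 : r₁ = r₂ := by
    rcases lt_trichotomy r₁ r₂ with hlt | heqr | hgt
    · exfalso
      have evalS := congrArg (fun X : Fm →L[ℂ] Fm => X (e (js.toFinset ∪ {r₂}))) heq
      rw [side_pos a adag ha hadag is js r₁ r₂ p1 p2
            (fun i hi => lt_trans (hr₁ i hi) hlt)
            hr₂' hlt,
          side_zero a adag ha hadag ks js r₂ p2 hr₂'] at evalS
      exact e_ne_zero _ evalS
    · exact heqr
    · exfalso
      have evalS := congrArg (fun X : Fm →L[ℂ] Fm => X (e (js.toFinset ∪ {r₁}))) heq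
      rw [side_zero a adag ha hadag is js r₁ p2 hr₁',
          side_pos a adag ha hadag ks js r₂ r₁ p3 p2
            (fun i hi => lt_trans (hr₂ i hi) hgt) hr₁' hgt] at evalS
      exact e_ne_zero _ evalS.symm
  -- Step 3 : is = ks
  have hik : is = ks := by
    rw [hRH] at evalJ
    exact sorted_lt_ext p1 p3 (e_inj evalJ)
  exact ⟨hik, rfl, hr12⟩


end
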